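/- arXiv:1808.06994 — 3 statements merged into one kernel-verified Lean document; each statement's English description precedes it below -/
import Mathlib

section
/- The slice-topology on ℍ is strictly finer than the Euclidean topology on ℍ; in particular, every Euclidean open set in ℍ is slice-open, but there exists a slice-open set that is not Euclidean open. -/
noncomputable section

abbrev Hq := Quaternion ℝ

/-- The sphere of imaginary units of the quaternions. -/
def SphereS : Set Hq := {q | q ^ 2 = -1}

/-- The identification of `ℂ` with the slice plane `ℂ_I = ℝ + ℝI`. -/
def sliceEmb (I : Hq) : ℂ → Hq := fun z => (z.re : Hq) + (z.im : Hq) * I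

/-- The slice complex plane `ℂ_I = ℝ + ℝI`. -/
def sliceC (I : Hq) : Set Hq := Set.range (sliceEmb I)

/-- The slice-topology on the quaternions: the quotient topology induced by the
canonical map from the disjoint union of the slices, i.e. the supremum of the
topologies coinduced by the parametrizations of the slices. -/
def sliceTopology : TopologicalSpace Hq :=
  ⨆ I ∈ SphereS, TopologicalSpace.coinduced (sliceEmb I) inferInstance

/-- The real line inside the quaternions. -/
def realLine : Set Hq := Set.range (fun x : ℝ => (x : Hq))

/-- `g : ℂ → ℍ` (thought of as a function on the slice `ℂ_I`) is (left) holomorphic on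
`U`: real differentiable with `∂ₓ g + I ∂_y g = 0`. -/
def SliceHolomorphicOn (I : Hq) (g : ℂ → Hq) (U : Set ℂ) : Prop :=
  ∀ z ∈ U, ∃ L : ℂ →L[ℝ] Hq, HasFDerivAt g L z ∧ L 1 + I * L Complex.I = 0

/-- A function on a slice-open set is slice regular if it is holomorphic on each slice. -/
def SliceRegular (f : Hq → Hq) (Ω : Set Hq) : Prop :=
  ∀ I ∈ SphereS, SliceHolomorphicOn I (f ∘ sliceEmb I) (sliceEmb I ⁻¹' Ω)

/-- `K(m)` for `K ∈ 𝕊^N` (with `K 0 = 1` by convention) and `1 ≤ m ≤ 2^N`: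
`∏_{i=N}^{1} (K_i K_{i-1})^{m_i}` where `(m_N … m_1)₂` is the binary expansion of `m-1`. -/
def zetaTerm (K : ℕ → Hq) (N m : ℕ) : Hq :=
  ((List.range N).reverse.map
    (fun j => (K (j + 1) * K j) ^ (if Nat.testBit (m - 1) j then 1 else 0))).prod

/-- The matrix `σ_N` (0-indexed): entry `(i,j)` is `(-1)^{N+(j+1)}` if
`(i+1)+(j+1) = 2^N + 1`, and `0` otherwise. -/
def sigmaMat (N : ℕ) : Matrix (Fin (2 ^ N)) (Fin (2 ^ N)) ℝ :=
  Matrix.of fun i j =>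
    if (i : ℕ) + (j : ℕ) = 2 ^ N - 1 then (-1 : ℝ) ^ (N + (j : ℕ) + 1) else 0

def QOrth (I J : Hq) : Prop := (I * star J).re = 0

lemma sphere_props {I : Hq} (h : I ∈ SphereS) :
    I.re = 0 ∧ I.imI ^ 2 + I.imJ ^ 2 + I.imK ^ 2 = 1 := by
  have h' : I * I = -1 := by rw [← pow_two]; exact h
  have hre := congrArg (fun q : Hq => q.re) h'
  have hi := congrArg (fun q : Hq => q.imI) h'
  have hj := congrArg (fun q : Hq => q.imJ) h'
  have hk := congrArg (fun q : Hq => q.imK) h'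
  have e1 : QuaternionAlgebra.re (1:Hq) = 1 := rfl
  have e2 : QuaternionAlgebra.imI (1:Hq) = 0 := rfl
  have e3 : QuaternionAlgebra.imJ (1:Hq) = 0 := rfl
  have e4 : QuaternionAlgebra.imK (1:Hq) = 0 := rfl
  simp [Quaternion.re_mul, Quaternion.imI_mul, Quaternion.imJ_mul, Quaternion.imK_mul, e1, e2, e3, e4] at hre hi hj hk
  constructor
  · nlinarith [sq_nonneg I.re, sq_nonneg I.imI, sq_nonneg I.imJ, sq_nonneg I.imK]
  · nlinarith [sq_nonneg I.re, sq_nonneg I.imI, sq_nonneg I.imJ, sq_nonneg I.imK]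

lemma sliceEmb_re' (I : Hq) (z : ℂ) : (sliceEmb I z).re = z.re + z.im * I.re := by
  simp [sliceEmb, Quaternion.re_mul]
lemma sliceEmb_imI (I : Hq) (z : ℂ) : (sliceEmb I z).imI = z.im * I.imI := by
  simp [sliceEmb, Quaternion.imI_mul]
lemma sliceEmb_imJ (I : Hq) (z : ℂ) : (sliceEmb I z).imJ = z.im * I.imJ := by
  simp [sliceEmb, Quaternion.imJ_mul]
lemma sliceEmb_imK (I : Hq) (z : ℂ) : (sliceEmb I z).imK = z.im * I.imK := by
  simp [sliceEmb, Quaternion.imK_mul]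

lemma mem_realLine_iff (q : Hq) : q ∈ realLine ↔ q.imI = 0 ∧ q.imJ = 0 ∧ q.imK = 0 := by
  constructor
  · rintro ⟨x, rfl⟩; simp
  · rintro ⟨h1, h2, h3⟩
    exact ⟨q.re, by ext <;> simp [h1, h2, h3]⟩

lemma mem_sliceC_Iq_iff (q : Hq) : q ∈ sliceC ⟨0,1,0,0⟩ ↔ q.imJ = 0 ∧ q.imK = 0 := by
  constructor
  · rintro ⟨z, rfl⟩
    exact ⟨(sliceEmb_imJ _ z).trans (by simp), (sliceEmb_imK _ z).trans (by simp)⟩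
  · rintro ⟨h2, h3⟩
    refine ⟨⟨q.re, q.imI⟩, ?_⟩
    ext
    · exact (sliceEmb_re' _ _).trans (by simp)
    · exact (sliceEmb_imI _ _).trans (by simp)
    · exact (sliceEmb_imJ _ _).trans (by simp [h2])
    · exact (sliceEmb_imK _ _).trans (by simp [h3])

lemma continuous_sliceEmb (I : Hq) : Continuous (sliceEmb I) := by
  unfold sliceEmb; continuity

/-- The slice-topology is strictly finer than the Euclidean topology on ℍ. -/
theorem sliceTopology_strictly_finer :
    (∀ Ω : Set Hq, IsOpen Ω → @IsOpen Hq sliceTopology Ω) ∧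
    (∃ Ω : Set Hq, @IsOpen Hq sliceTopology Ω ∧ ¬ IsOpen Ω) := by
  constructor
  · intro Ω hΩ
    unfold sliceTopology
    simp only [isOpen_iSup_iff, isOpen_coinduced]
    intro I _
    exact hΩ.preimage (continuous_sliceEmb I)
  · refine ⟨sliceC ⟨0,1,0,0⟩ \ realLine, ?_, ?_⟩
    · unfold sliceTopology
      simp only [isOpen_iSup_iff, isOpen_coinduced]
      intro I hI
      obtain ⟨hre, hsum⟩ := sphere_props hI
      by_cases hJK : I.imJ = 0 ∧ I.imK = 0
      · have himI : I.imI ≠ 0 := by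
          intro h; rw [h, hJK.1, hJK.2] at hsum; norm_num at hsum
        have heq : sliceEmb I ⁻¹' (sliceC ⟨0,1,0,0⟩ \ realLine) = Complex.im ⁻¹' {0}ᶜ := by
          ext z
          simp [Set.mem_preimage, Set.mem_diff, mem_sliceC_Iq_iff, mem_realLine_iff,
            sliceEmb_imI, sliceEmb_imJ, sliceEmb_imK, hJK.1, hJK.2, mul_eq_zero, himI]
        rw [heq]
        exact isOpen_compl_singleton.preimage Complex.continuous_im
      · have heq : sliceEmb I ⁻¹' (sliceC ⟨0,1,0,0⟩ \ realLine) = ∅ := by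
          ext z
          simp only [Set.mem_empty_iff_false, iff_false]
          rintro ⟨h1, h2⟩
          rw [mem_sliceC_Iq_iff, sliceEmb_imJ, sliceEmb_imK] at h1
          have hz : z.im = 0 := by
            rcases not_and_or.mp hJK with h | h
            · exact (mul_eq_zero.mp h1.1).resolve_right h
            · exact (mul_eq_zero.mp h1.2).resolve_right h
          exact h2 ((mem_realLine_iff _).mpr
            ⟨by rw [sliceEmb_imI, hz, zero_mul], by rw [sliceEmb_imJ, hz, zero_mul],
             by rw [sliceEmb_imK, hz, zero_mul]⟩)
        rw [heq]
        exact isOpen_empty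
    · intro hopen
      have hmem : (⟨0,1,0,0⟩ : Hq) ∈ sliceC ⟨0,1,0,0⟩ \ realLine := by
        constructor
        · exact (mem_sliceC_Iq_iff _).mpr ⟨rfl, rfl⟩
        · intro h; have := ((mem_realLine_iff _).mp h).1; simp at this
      set f : ℝ → Hq := fun t => (⟨0,1,0,0⟩ : Hq) + t • (⟨0,0,1,0⟩ : Hq) with hf
      have hcf : Continuous f := by
        apply Continuous.add continuous_const
        exact continuous_id.smul continuous_const
      have hV : IsOpen (f ⁻¹' (sliceC ⟨0,1,0,0⟩ \ realLine)) := hopen.preimage hcf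
      have h0 : (0:ℝ) ∈ f ⁻¹' (sliceC ⟨0,1,0,0⟩ \ realLine) := by
        have e : f 0 = ⟨0,1,0,0⟩ := (congrArg (fun x : Hq => @HAdd.hAdd Hq Hq Hq _ ⟨0,1,0,0⟩ x)
          (zero_smul ℝ (⟨0,0,1,0⟩ : Hq))).trans (add_zero _)
        exact (congrArg (· ∈ sliceC ⟨0,1,0,0⟩ \ realLine) e).mpr hmem
      obtain ⟨ε, hε, hball⟩ := Metric.isOpen_iff.mp hV 0 h0
      have hmem2 : f (ε/2) ∈ sliceC ⟨0,1,0,0⟩ \ realLine := by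
        apply hball
        rw [Metric.mem_ball, Real.dist_eq, sub_zero, abs_of_pos (by linarith)]
        linarith
      have hJ0 := ((mem_sliceC_Iq_iff _).mp hmem2.1).1
      simp only [hf] at hJ0
      have : (ε/2 : ℝ) = 0 := by simpa using hJ0
      linarith
end
end

section
/- If Ω is a slice-connected set in ℍ (connected in the slice-topology) that is slice-open and satisfies Ω ∩ ℝ = ∅, then there exists I ∈ 𝕊 such that Ω ⊆ ℂ_I. -/
noncomputable section

lemma sphere_re {I : Hq} (hI : I ∈ SphereS) : I.re = 0 := by
  have h : I * I = -1 := by rw [← pow_two]; exact hI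
  have h1 := congrArg QuaternionAlgebra.re h
  have h2 := congrArg QuaternionAlgebra.imI h
  have h3 := congrArg QuaternionAlgebra.imJ h
  have h4 := congrArg QuaternionAlgebra.imK h
  simp [Quaternion.re_mul, Quaternion.imI_mul, Quaternion.imJ_mul, Quaternion.imK_mul, Quaternion.re_one, Quaternion.imI_one, Quaternion.imJ_one, Quaternion.imK_one] at h1 h2 h3 h4
  nlinarith [sq_nonneg I.re, sq_nonneg I.imI, sq_nonneg I.imJ, sq_nonneg I.imK]

lemma sphere_ne_zero {I : Hq} (hI : I ∈ SphereS) : I ≠ 0 := by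
  intro h; rw [SphereS, Set.mem_setOf_eq, h] at hI; simp at hI

lemma slice_unique {I J : Hq} (hI : I ∈ SphereS) (hJ : J ∈ SphereS) {x y a b : ℝ}
    (hy : y ≠ 0) (h : (x:Hq) + (y:Hq)*J = (a:Hq) + (b:Hq)*I) : J = I ∨ J = -I := by
  have hIre := sphere_re hI
  have hJre := sphere_re hJ
  have h2 := congrArg QuaternionAlgebra.imI h
  have h3 := congrArg QuaternionAlgebra.imJ h
  have h4 := congrArg QuaternionAlgebra.imK h
  simp [Quaternion.re_mul, Quaternion.imI_mul, Quaternion.imJ_mul, Quaternion.imK_mul, hIre, hJre] at h2 h3 h4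
  set c := b / y with hc
  have hJc : J = c • I := by
    ext <;> simp [hJre, hIre, hc] <;> field_simp <;> nlinarith [h2, h3, h4]
  have hsq : c ^ 2 = 1 := by
    have hs : (c • I) ^ 2 = -1 := by rw [← hJc]; exact hJ
    rw [smul_pow, hI, smul_neg, neg_eq_iff_eq_neg, neg_neg, ← Algebra.algebraMap_eq_smul_one] at hs
    exact Quaternion.coe_injective (by simpa using hs)
  rw [sq] at hsq
  rcases mul_self_eq_one_iff.mp hsq with hcv | hcv
  · left; rw [hJc, hcv, one_smul]
  · right; rw [hJc, hcv, neg_smul, one_smul]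

lemma real_mem_slice (I : Hq) (r : ℝ) : (r : Hq) ∈ sliceC I :=
  ⟨(r : ℂ), by simp [sliceEmb]⟩

lemma sliceEmb_real_iff {J : Hq} (hJ : J ∈ SphereS) (z : ℂ) :
    sliceEmb J z ∈ realLine ↔ z.im = 0 := by
  constructor
  · rintro ⟨r, hr⟩
    simp only [sliceEmb] at hr
    have h1 := congrArg QuaternionAlgebra.re hr.symm
    have hJre := sphere_re hJ
    simp [Quaternion.re_mul, hJre] at h1
    have h0 : ((z.im : ℝ):Hq) * J = 0 := by
      have : ((z.re:ℝ):Hq) + (z.im:Hq) * J = ((z.re:ℝ):Hq) + 0 := by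
        rw [add_zero, ← hr, h1]
      exact (add_right_injective _ this)
    rcases mul_eq_zero.mp h0 with h | h
    · exact_mod_cast Quaternion.coe_injective (by exact_mod_cast h)
    · exact absurd h (sphere_ne_zero hJ)
  · intro h
    exact ⟨z.re, by simp [sliceEmb, h]⟩

lemma sliceC_neg (I : Hq) : sliceC (-I) = sliceC I := by
  have key : ∀ K : Hq, sliceC (-K) ⊆ sliceC K := by
    rintro K q ⟨z, hz⟩
    refine ⟨(starRingEnd ℂ) z, ?_⟩
    rw [← hz]; simp [sliceEmb]
  ext q; constructor
  · exact fun h => key I h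
  · intro h; have := key (-I); rw [neg_neg] at this; exact this h

lemma mem_slice_of_not_real {q : Hq} (hq : q ∉ realLine) :
    ∃ I ∈ SphereS, ∃ z : ℂ, z.im ≠ 0 ∧ sliceEmb I z = q := by
  set v : Hq := q - (q.re : Hq) with hv
  have hvre : v.re = 0 := by simp [hv]
  have hvne : v ≠ 0 := by
    intro h
    exact hq ⟨q.re, by rw [hv, sub_eq_zero] at h; exact h.symm⟩
  have hnorm : ‖v‖ ≠ 0 := norm_ne_zero_iff.mpr hvne
  set I : Hq := (‖v‖)⁻¹ • v with hI
  have hstar : star v = -v := by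
    ext <;> simp [Quaternion.re_star, hvre]
  have hvv : v ^ 2 = -((Quaternion.normSq v : ℝ) : Hq) := by
    rw [pow_two]
    have h := Quaternion.self_mul_star (a := v)
    rw [hstar, mul_neg] at h
    rw [← h, neg_neg]
  have hIS : I ∈ SphereS := by
    show I ^ 2 = -1
    rw [hI, smul_pow, hvv, smul_neg, Quaternion.normSq_eq_norm_mul_self, Quaternion.smul_coe,
      show ‖v‖⁻¹ ^ 2 * (‖v‖ * ‖v‖) = 1 by field_simp]
    simp
  refine ⟨I, hIS, ⟨q.re, ‖v‖⟩, by simpa using hnorm, ?_⟩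
  show ((q.re:ℝ):Hq) + ((‖v‖:ℝ):Hq) * I = q
  rw [hI, Quaternion.coe_mul_eq_smul, smul_smul, mul_inv_cancel₀ hnorm, one_smul, hv]
  abel

lemma isOpen_im_ne : IsOpen {z : ℂ | z.im ≠ 0} :=
  isOpen_compl_iff.mpr (isClosed_eq Complex.continuous_im continuous_const)

lemma isOpen_slice_iff {S : Set Hq} :
    @IsOpen Hq sliceTopology S ↔ ∀ I ∈ SphereS, IsOpen (sliceEmb I ⁻¹' S) := by
  rw [sliceTopology]
  simp only [isOpen_iSup_iff, isOpen_coinduced]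

lemma sphere_nonempty : (⟨0,1,0,0⟩ : Hq) ∈ SphereS := by
  show (⟨0,1,0,0⟩ : Hq) ^ 2 = -1
  refine (pow_two _).trans ?_
  ext <;> simp [Quaternion.re_mul, Quaternion.imI_mul, Quaternion.imJ_mul, Quaternion.imK_mul]

/-- A slice-open, slice-connected set avoiding the reals lies in a single slice. -/
theorem sliceConnected_no_real_subset_slice (Ω : Set Hq)
    (hopen : @IsOpen Hq sliceTopology Ω)
    (hconn : @IsPreconnected Hq sliceTopology Ω)
    (hR : Ω ∩ realLine = ∅) :
    ∃ I ∈ SphereS, Ω ⊆ sliceC I := by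
  rcases Set.eq_empty_or_nonempty Ω with rfl | ⟨q₀, hq₀⟩
  · exact ⟨_, sphere_nonempty, by simp⟩
  have hq₀R : q₀ ∉ realLine := fun h => (Set.eq_empty_iff_forall_notMem.mp hR q₀) ⟨hq₀, h⟩
  obtain ⟨I, hIS, z₀, hz₀, hq₀I⟩ := mem_slice_of_not_real hq₀R
  refine ⟨I, hIS, ?_⟩
  by_contra hsub
  obtain ⟨q₁, hq₁, hq₁I⟩ := Set.not_subset.mp hsub
  set u : Set Hq := sliceC I \ realLine with hu_def
  set v : Set Hq := (sliceC I)ᶜ with hv_def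
  have hu : @IsOpen Hq sliceTopology u := by
    rw [isOpen_slice_iff]
    intro J hJ
    by_cases hJI : J = I ∨ J = -I
    · have hpre : sliceEmb J ⁻¹' u = {z : ℂ | z.im ≠ 0} := by
        ext z
        simp only [Set.mem_preimage, hu_def, Set.mem_diff, Set.mem_setOf_eq]
        constructor
        · rintro ⟨-, hnr⟩ h0
          exact hnr ((sliceEmb_real_iff hJ z).mpr h0)
        · intro h0
          refine ⟨?_, fun hr => h0 ((sliceEmb_real_iff hJ z).mp hr)⟩
          rcases hJI with rfl | rfl
          · exact ⟨z, rfl⟩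
          · rw [← sliceC_neg]; exact ⟨z, rfl⟩
      rw [hpre]; exact isOpen_im_ne
    · have hpre : sliceEmb J ⁻¹' u = ∅ := by
        ext z
        simp only [Set.mem_preimage, hu_def, Set.mem_diff, Set.mem_empty_iff_false, iff_false,
          not_and]
        rintro ⟨w, hw⟩ hnr
        have him : z.im ≠ 0 := fun h0 => hnr ((sliceEmb_real_iff hJ z).mpr h0)
        exact hJI (slice_unique hIS hJ him hw.symm)
      rw [hpre]; exact isOpen_empty
  have hv : @IsOpen Hq sliceTopology v := by
    rw [isOpen_slice_iff]
    intro J hJ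
    by_cases hJI : J = I ∨ J = -I
    · have hpre : sliceEmb J ⁻¹' v = ∅ := by
        ext z
        simp only [Set.mem_preimage, hv_def, Set.mem_compl_iff, Set.mem_empty_iff_false,
          iff_false, not_not]
        rcases hJI with rfl | rfl
        · exact ⟨z, rfl⟩
        · rw [← sliceC_neg]; exact ⟨z, rfl⟩
      rw [hpre]; exact isOpen_empty
    · have hpre : sliceEmb J ⁻¹' v = {z : ℂ | z.im ≠ 0} := by
        ext z
        simp only [Set.mem_preimage, hv_def, Set.mem_compl_iff, Set.mem_setOf_eq]
        constructor
        · intro hc h0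
          apply hc
          have he : sliceEmb J z = ((z.re : ℝ) : Hq) := by simp [sliceEmb, h0]
          rw [he]
          exact real_mem_slice I z.re
        · rintro h0 ⟨w, hw⟩
          exact hJI (slice_unique hIS hJ h0 hw.symm)
      rw [hpre]; exact isOpen_im_ne
  have hcov : Ω ⊆ u ∪ v := by
    intro q hq
    by_cases hqI : q ∈ sliceC I
    · exact Or.inl ⟨hqI, fun h => (Set.eq_empty_iff_forall_notMem.mp hR q) ⟨hq, h⟩⟩
    · exact Or.inr hqI
  have hnu : (Ω ∩ u).Nonempty := ⟨q₀, hq₀, ⟨z₀, hq₀I⟩, hq₀R⟩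
  have hnv : (Ω ∩ v).Nonempty := ⟨q₁, hq₁, hq₁I⟩
  obtain ⟨q, -, hqu, hqv⟩ := hconn u v hu hv hcov hnu hnv
  exact hqv hqu.1
end
end

section
/- The topological space (ℍ, τ_s), quaternions with the slice-topology, is connected and locally path-connected, and hence path-connected. -/
noncomputable section

lemma Hq.exists_mem_sphereS : ∃ I : Hq, I ∈ SphereS := by
  refine ⟨⟨0, 1, 0, 0⟩, ?_⟩
  show (⟨0, 1, 0, 0⟩ : Hq) ^ 2 = -1
  erw [sq]
  ext <;> simp

lemma Hq.exists_slice (q : Hq) : ∃ I ∈ SphereS, ∃ z : ℂ, sliceEmb I z = q := by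
  set v : Hq := q - (q.re : Hq) with hv
  have hvre : v.re = 0 := by simp [hv]
  by_cases hv0 : v = 0
  · obtain ⟨I, hI⟩ := Hq.exists_mem_sphereS
    refine ⟨I, hI, ⟨q.re, 0⟩, ?_⟩
    have hq : q = (q.re : Hq) := by
      rw [hv] at hv0
      exact sub_eq_zero.mp hv0
    simp [sliceEmb]
    exact hq.symm
  · set r : ℝ := ‖v‖ with hr
    have hr0 : r ≠ 0 := norm_ne_zero_iff.mpr hv0
    have hstar : star v = -v := Quaternion.star_eq_neg.mpr hvre
    have hvv : v * v = -((r * r : ℝ) : Hq) := by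
      have h0 : v * v = -(v * star v) := by rw [hstar, mul_neg, neg_neg]
      rw [h0, Quaternion.mul_star_eq_coe]
      congr 1
      rw [← Quaternion.normSq_def]
      exact congrArg (fun x : ℝ => (x : Hq)) (Quaternion.normSq_eq_norm_mul_self v)
    refine ⟨(r⁻¹ : ℝ) • v, ?_, ⟨q.re, r⟩, ?_⟩
    · show ((r⁻¹ : ℝ) • v) ^ 2 = -1
      rw [sq, smul_mul_smul_comm, hvv, smul_neg, Quaternion.smul_coe]
      rw [show (-1 : Hq) = -((1 : ℝ) : Hq) by simp]
      congr 1
      field_simp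
    · show (q.re : Hq) + (r : Hq) * ((r⁻¹ : ℝ) • v) = q
      rw [Quaternion.coe_mul_eq_smul, smul_smul, mul_inv_cancel₀ hr0, one_smul, hv]
      abel

open Topology in
lemma sliceTopology_isOpen_iff (s : Set Hq) :
    IsOpen[sliceTopology] s ↔ ∀ I ∈ SphereS, IsOpen (sliceEmb I ⁻¹' s) := by
  rw [sliceTopology]
  simp only [isOpen_iSup_iff, isOpen_coinduced]

open Topology in
lemma sliceEmb_continuous {I : Hq} (hI : I ∈ SphereS) :
    Continuous[inferInstance, sliceTopology] (sliceEmb I) := by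
  rw [continuous_iff_coinduced_le]
  exact le_iSup₂ (f := fun I (_ : I ∈ SphereS) =>
    TopologicalSpace.coinduced (sliceEmb I) inferInstance) I hI

/-- `(ℍ, τ_s)` is connected and locally path-connected, hence path-connected. -/
theorem sliceTopology_connected_locPathConnected :
    @ConnectedSpace Hq sliceTopology ∧
    @LocPathConnectedSpace Hq sliceTopology ∧
    @PathConnectedSpace Hq sliceTopology := by
  letI : TopologicalSpace Hq := sliceTopology
  have hjoin : ∀ q : Hq, Joined (0 : Hq) q := by
    intro q
    obtain ⟨I, hI, z, hz⟩ := Hq.exists_slice q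
    have h0 : sliceEmb I 0 = 0 := by simp [sliceEmb]
    have : Joined (0 : ℂ) z := PathConnectedSpace.joined 0 z
    have h2 : Joined (sliceEmb I 0) (sliceEmb I z) :=
      ⟨this.somePath.map (sliceEmb_continuous hI)⟩
    rwa [h0, hz] at h2
  have hpath : PathConnectedSpace Hq :=
    ⟨⟨0⟩, fun x y => (hjoin x).symm.trans (hjoin y)⟩
  have hloc : LocPathConnectedSpace Hq := by
    refine locPathConnectedSpace_iff_isOpen_pathComponentIn.mpr ?_
    intro x u hu
    rw [sliceTopology_isOpen_iff]
    intro I hI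
    rw [isOpen_iff_mem_nhds]
    intro w hw
    have hwj : JoinedIn u x (sliceEmb I w) := hw
    have hU : IsOpen (sliceEmb I ⁻¹' u) := (sliceTopology_isOpen_iff u).mp hu I hI
    have hwu : w ∈ sliceEmb I ⁻¹' u := Set.preimage_mono pathComponentIn_subset hw
    have hsub : pathComponentIn (sliceEmb I ⁻¹' u) w ⊆ sliceEmb I ⁻¹' pathComponentIn u x := by
      intro y hy
      have hyj : JoinedIn (sliceEmb I ⁻¹' u) w y := hy
      have : JoinedIn u (sliceEmb I w) (sliceEmb I y) :=
        (hyj.map (sliceEmb_continuous hI)).mono (Set.image_preimage_subset _ _)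
      exact hwj.trans this
    exact Filter.mem_of_superset
      ((hU.pathComponentIn w).mem_nhds (mem_pathComponentIn_self hwu)) hsub
  exact ⟨hpath.connectedSpace, hloc, hpath⟩
end
end
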